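/- Let X be a topological space, let l be a filter on an index type ι, let A : ι → Set X be a family of subsets, and let A₀ ⊆ X. If X is Hausdorff and A₀ is contained in the lower closed limit Li_l A, then A converges to A₀ along l in the lower co-compact topology on the power set of X. Conversely, if X is compact and A converges to A₀ along l in the lower co-compact topology, then A₀ is contained in Li_l A. -/

import Mathlib

open Filter Set Topology TopologicalSpace

/-- The lower co-compact topology on the power set of `X`, generated by the sets
`{A | A ∩ Kᶜ ≠ ∅}` for `K` compact. -/
def lowerCocompact (X : Type*) [TopologicalSpace X] : TopologicalSpace (Set X) :=
  generateFrom {S | ∃ K : Set X, IsCompact K ∧ S = {A : Set X | (A ∩ Kᶜ).Nonempty}}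

/-- The Kuratowski limit inferior (lower closed limit) of a family of sets along a filter. -/
def KuratowskiLi {X ι : Type*} [TopologicalSpace X] (l : Filter ι) (A : ι → Set X) : Set X :=
  {x | ∀ U : Set X, IsOpen U → x ∈ U → ∀ᶠ i in l, (A i ∩ U).Nonempty}

/-- If `X` is Hausdorff and `A₀ ⊆ Li_l A`, then `A` converges to `A₀` along `l` in the
lower co-compact topology; conversely, if `X` is compact and `A` converges to `A₀` along
`l` in the lower co-compact topology, then `A₀ ⊆ Li_l A`. -/
theorem stmt_13 {X ι : Type*} [TopologicalSpace X]
    (l : Filter ι) (A : ι → Set X) (A₀ : Set X) :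
    (T2Space X → A₀ ⊆ KuratowskiLi l A →
        Tendsto A l (@nhds (Set X) (lowerCocompact X) A₀)) ∧
      (CompactSpace X → Tendsto A l (@nhds (Set X) (lowerCocompact X) A₀) →
        A₀ ⊆ KuratowskiLi l A) := by
  constructor
  · intro _ hsub
    rw [lowerCocompact, tendsto_nhds_generateFrom_iff]
    rintro S ⟨K, hK, rfl⟩ hA₀
    obtain ⟨x, hxA, hxK⟩ := hA₀
    exact hsub hxA Kᶜ hK.isClosed.isOpen_compl hxK
  · intro _ htend x hx U hU hxU
    rw [lowerCocompact, tendsto_nhds_generateFrom_iff] at htend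
    have := htend {A : Set X | (A ∩ Uᶜᶜ).Nonempty} ⟨Uᶜ, hU.isClosed_compl.isCompact, rfl⟩
      (by rw [compl_compl]; exact ⟨x, hx, hxU⟩)
    simp [compl_compl] at this
    exact this
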